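/- Let N be a positive integer. Let X₁, X₂, … be i.i.d. 1-subgaussian real random variables and Y₁, Y₂, … be i.i.d. 1-subgaussian real random variables, independent of the X's, with E[X₁] > E[Y₁]. Set Δ = E[X₁ − Y₁] and μ̂ₜ = (1/t)·∑_{n=1}^t (Xₙ − Yₙ). Then P(∃ s ≥ 1 : μ̂ₛ + √((8/s)·log⁺(N/s)) ≤ 0) ≤ 15/(N·Δ²). -/

import Mathlib

open MeasureTheory ProbabilityTheory Real
open scoped ENNReal

set_option maxHeartbeats 1000000

/-- `Z` is 1-subgaussian: `E[exp(λZ − λE[Z])] ≤ exp(λ²/2)` for all `λ ∈ ℝ`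
(with the integrability of the moment generating function). -/
def IsOneSubgaussian {Ω : Type*} [MeasurableSpace Ω] (μ : Measure Ω) (Z : Ω → ℝ) : Prop :=
  Integrable Z μ ∧ ∀ l : ℝ,
    Integrable (fun ω => Real.exp (l * Z ω - l * (∫ ω', Z ω' ∂μ))) μ ∧
    (∫ ω, Real.exp (l * Z ω - l * (∫ ω', Z ω' ∂μ)) ∂μ) ≤ Real.exp (l ^ 2 / 2)

/-- `log⁺ x = max {0, log x}`. -/
noncomputable def logPlus (x : ℝ) : ℝ := max 0 (Real.log x)

lemma exp_ge_cubic {t : ℝ} (ht : 0 ≤ t) : 1 + t + t^2/2 + t^3/6 ≤ Real.exp t := by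
  have h := Real.sum_le_exp_of_nonneg ht 4
  simp [Finset.sum_range_succ, Nat.factorial] at h
  linarith

lemma aux_quartic {w : ℝ} (hw : 0 ≤ w) :
    w^3 ≤ 7/4 * (w^2/2 + (w^2/2)^2/2 + (w^2/2)^3/6) := by
  nlinarith [sq_nonneg (w - 1), sq_nonneg (w^2 - 2*w), sq_nonneg (w^2 - w - 1),
    sq_nonneg (w*(w-1)), sq_nonneg (w^2 - 2), sq_nonneg w, sq_nonneg (w^3 - 2*w),
    sq_nonneg (w^2 - 7/5*w), sq_nonneg (w^3 - 7/5*w^2), mul_nonneg hw hw]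

lemma telescope_ineq {z : ℝ} (hz : 0 ≤ z) :
    z * Real.sqrt z * Real.exp (-z) ≤ 7/4 * (Real.exp (-(z/2)) - Real.exp (-z)) := by
  set w := Real.sqrt z with hw
  have hw0 : 0 ≤ w := Real.sqrt_nonneg z
  have hz' : z = w^2 := by rw [hw, Real.sq_sqrt hz]
  have h1 : z * Real.sqrt z = w^3 := by
    rw [hz', Real.sqrt_sq hw0]; ring
  have h2 : 1 + z/2 + (z/2)^2/2 + (z/2)^3/6 ≤ Real.exp (z/2) := exp_ge_cubic (by linarith)
  have h3 : w^3 ≤ 7/4 * (Real.exp (z/2) - 1) := by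
    have := aux_quartic hw0
    have heq : w^2/2 = z/2 := by rw [hz']
    rw [heq] at this
    linarith
  have h4 : Real.exp (-(z/2)) - Real.exp (-z) = Real.exp (-z) * (Real.exp (z/2) - 1) := by
    rw [mul_sub, ← Real.exp_add]; ring_nf
  rw [h1, h4]
  have h5 : 0 < Real.exp (-z) := Real.exp_pos _
  calc w^3 * Real.exp (-z) ≤ (7/4 * (Real.exp (z/2) - 1)) * Real.exp (-z) := by
        apply mul_le_mul_of_nonneg_right h3 h5.le
    _ = 7/4 * (Real.exp (-z) * (Real.exp (z/2) - 1)) := by ring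
  
lemma six_le_exp_15_8 : (6:ℝ) ≤ Real.exp (15/8) := by
  have h : (5/2 : ℝ) ≤ Real.exp (15/16) := by
    have := exp_ge_cubic (t := 15/16) (by norm_num)
    nlinarith
  have : Real.exp (15/8) = Real.exp (15/16) * Real.exp (15/16) := by
    rw [← Real.exp_add]; norm_num
  nlinarith [Real.exp_pos (15/16 : ℝ)]

lemma endpoint_min {α γ u s : ℝ} (hu : 0 < u) (hγ : 0 ≤ γ) (h1 : u ≤ s) (h2 : s ≤ 2*u) :
    min (α*u + γ*Real.sqrt u) (α*(2*u) + γ*Real.sqrt (2*u)) ≤ α*s + γ*Real.sqrt s := by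
  set p := Real.sqrt u
  set q := Real.sqrt (2*u)
  set r := Real.sqrt s
  have hp : p^2 = u := Real.sq_sqrt hu.le
  have hq : q^2 = 2*u := Real.sq_sqrt (by linarith)
  have hr : r^2 = s := Real.sq_sqrt (by linarith)
  have hpr : p ≤ r := Real.sqrt_le_sqrt h1
  have hrq : r ≤ q := Real.sqrt_le_sqrt h2
  have hp0 : 0 ≤ p := Real.sqrt_nonneg _
  rcases le_or_gt 0 α with hα | hα
  · refine le_trans (min_le_left _ _) ?_
    nlinarith
  · rcases le_or_gt 0 (α*(p+q) + γ) with hD | hD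
    · refine le_trans (min_le_left _ _) ?_
      have key : α*s + γ*r - (α*u + γ*p) = (r-p)*(α*(r+p) + γ) := by
        rw [← hp, ← hr]; ring
      have h5 : α*(r+p) ≥ α*(q+p) := by nlinarith
      nlinarith
    · refine le_trans (min_le_right _ _) ?_
      have key : α*s + γ*r - (α*(2*u) + γ*q) = (r-q)*(α*(r+q) + γ) := by
        rw [← hq, ← hr]; ring
      have h5 : α*(r+q) + γ ≤ α*(p+q) + γ := by nlinarith
      nlinarith

lemma sqrt2_ge : (5/4:ℝ) ≤ Real.sqrt 2 := by
  nlinarith [Real.sq_sqrt (by norm_num : (0:ℝ) ≤ 2), Real.sqrt_nonneg (2:ℝ)]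

lemma block_real {Δ u s L : ℝ} (hΔ : 0 < Δ) (hu : 0 < u) (hL : 0 ≤ L)
    (h1 : u ≤ s) (h2 : s ≤ 2*u) :
    2*u*(Δ^2/8) + 4*Real.sqrt (u*(Δ^2/8)*L) + 3/2*L ≤
      (Δ/2 + Real.sqrt (L/u)) * (s*Δ + Real.sqrt (8*s*L)) -
        s*(Δ/2 + Real.sqrt (L/u))^2 := by
  have hs0 : (0:ℝ) ≤ s := by linarith
  have hr0 : 0 ≤ Real.sqrt (L/u) := Real.sqrt_nonneg _
  have hr2 : (Real.sqrt (L/u))^2 = L/u := Real.sq_sqrt (div_nonneg hL hu.le)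
  have hA0 : 0 ≤ Real.sqrt (u*(Δ^2/8)*L) := Real.sqrt_nonneg _
  have h8L0 : 0 ≤ Real.sqrt (8*L) := Real.sqrt_nonneg _
  have hγ0 : 0 ≤ (Δ/2 + Real.sqrt (L/u)) * Real.sqrt (8*L) := by positivity
  have hsplit : Real.sqrt (8*s*L) = Real.sqrt s * Real.sqrt (8*L) := by
    rw [← Real.sqrt_mul hs0]; ring_nf
  have hRHS : (Δ/2 + Real.sqrt (L/u)) * (s*Δ + Real.sqrt (8*s*L)) -
        s*(Δ/2 + Real.sqrt (L/u))^2 =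
      (Δ^2/4 - L/u)*s + ((Δ/2 + Real.sqrt (L/u)) * Real.sqrt (8*L))*Real.sqrt s := by
    rw [hsplit]
    have hlam2 : (Δ/2 + Real.sqrt (L/u))^2 = Δ^2/4 + Δ*Real.sqrt (L/u) + L/u := by
      rw [show (Δ/2 + Real.sqrt (L/u))^2
          = Δ^2/4 + Δ*Real.sqrt (L/u) + (Real.sqrt (L/u))^2 by ring, hr2]
    rw [hlam2]; ring
  rw [hRHS]
  refine le_trans ?_ (endpoint_min hu hγ0 h1 h2)
  have e1 : Δ/2 * Real.sqrt (8*L) * Real.sqrt u = 4*Real.sqrt (u*(Δ^2/8)*L) := by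
    have h4A : 4*Real.sqrt (u*(Δ^2/8)*L) = Real.sqrt (16*(u*(Δ^2/8)*L)) := by
      rw [show (16:ℝ)*(u*(Δ^2/8)*L) = 4^2*(u*(Δ^2/8)*L) by ring,
        Real.sqrt_mul (show (0:ℝ) ≤ 4^2 by norm_num) (u*(Δ^2/8)*L),
        Real.sqrt_sq (by norm_num : (0:ℝ) ≤ 4)]
    have hD2 : Δ/2 = Real.sqrt ((Δ/2)^2) := (Real.sqrt_sq (by linarith)).symm
    rw [h4A]
    nth_rewrite 1 [hD2]
    rw [← Real.sqrt_mul (by positivity) (8*L), ← Real.sqrt_mul (by positivity) u]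
    congr 1; ring
  have e2 : Real.sqrt (L/u) * Real.sqrt (8*L) * Real.sqrt u = 2*Real.sqrt 2*L := by
    rw [← Real.sqrt_mul (div_nonneg hL hu.le) (8*L), ← Real.sqrt_mul (by positivity) u]
    rw [show L/u*(8*L)*u = (2*L)^2*2 by field_simp; ring]
    rw [Real.sqrt_mul (sq_nonneg (2*L)) 2, Real.sqrt_sq (by linarith : (0:ℝ) ≤ 2*L)]
    ring
  have eγu : ((Δ/2 + Real.sqrt (L/u)) * Real.sqrt (8*L)) * Real.sqrt u
      = 4*Real.sqrt (u*(Δ^2/8)*L) + 2*Real.sqrt 2*L := by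
    linear_combination e1 + e2
  have hq2 : Real.sqrt (2*u) = Real.sqrt 2 * Real.sqrt u :=
    Real.sqrt_mul (by norm_num) u
  have hs2 : Real.sqrt 2 ≥ 5/4 := sqrt2_ge
  have hs2' : (Real.sqrt 2)^2 = 2 := Real.sq_sqrt (by norm_num)
  have hLu : L/u*u = L := by field_simp
  have hend1 : 2*u*(Δ^2/8) + 4*Real.sqrt (u*(Δ^2/8)*L) + 3/2*L ≤
      (Δ^2/4 - L/u)*u + ((Δ/2 + Real.sqrt (L/u)) * Real.sqrt (8*L))*Real.sqrt u := by
    rw [eγu, show (Δ^2/4 - L/u)*u = u*(Δ^2/4) - L/u*u by ring, hLu]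
    nlinarith [mul_nonneg (by linarith : (0:ℝ) ≤ 2*Real.sqrt 2 - 5/2) hL]
  have hend2 : 2*u*(Δ^2/8) + 4*Real.sqrt (u*(Δ^2/8)*L) + 3/2*L ≤
      (Δ^2/4 - L/u)*(2*u) + ((Δ/2 + Real.sqrt (L/u)) * Real.sqrt (8*L))*Real.sqrt (2*u) := by
    rw [hq2, show ((Δ/2 + Real.sqrt (L/u)) * Real.sqrt (8*L))*(Real.sqrt 2*Real.sqrt u)
        = Real.sqrt 2*(((Δ/2 + Real.sqrt (L/u)) * Real.sqrt (8*L))*Real.sqrt u) by ring, eγu,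
      show (Δ^2/4 - L/u)*(2*u) = u*(Δ^2/2) - 2*(L/u*u) by ring, hLu]
    nlinarith [mul_nonneg (by linarith : (0:ℝ) ≤ Real.sqrt 2 - 1) hA0,
      mul_pos hu (mul_pos hΔ hΔ), hs2', sq_nonneg Δ]
  exact le_min hend1 hend2

noncomputable def lamK (N : ℕ) (Δ : ℝ) (k : ℕ) : ℝ :=
  Δ/2 + Real.sqrt (logPlus ((N:ℝ)/2^(k+1)) / 2^k)

noncomputable def betK (N : ℕ) (Δ : ℝ) (k : ℕ) : ℝ :=
  2*(2^k)*(Δ^2/8) + 4*Real.sqrt ((2^k)*(Δ^2/8)*(logPlus ((N:ℝ)/2^(k+1))))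
    + 3/2*(logPlus ((N:ℝ)/2^(k+1)))

lemma logPlus_nonneg (x : ℝ) : 0 ≤ logPlus x := le_max_left _ _

lemma logPlus_mono {x y : ℝ} (hx : 0 < x) (hxy : x ≤ y) : logPlus x ≤ logPlus y :=
  max_le_max le_rfl (Real.log_le_log hx hxy)

lemma sqrt_exp_half (x : ℝ) : Real.sqrt (Real.exp x) = Real.exp (x/2) := by
  rw [show Real.exp x = (Real.exp (x/2))^2 by rw [pow_two, ← Real.exp_add]; ring_nf]
  exact Real.sqrt_sq (Real.exp_pos _).le

lemma event_to_block {N s : ℕ} (hs : 1 ≤ s) (hN : 0 < N) {Δ Tval Wsum : ℝ} (hΔpos : 0 < Δ)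
    (hW : Wsum / s + Real.sqrt ((8/s) * logPlus ((N:ℝ)/s)) ≤ 0)
    (hT : Tval = s*Δ - Wsum) :
    betK N Δ (Nat.log 2 s) ≤ lamK N Δ (Nat.log 2 s) * Tval - s * (lamK N Δ (Nat.log 2 s))^2 := by
  set k := Nat.log 2 s with hk
  have hs0 : (0:ℝ) < s := by exact_mod_cast hs
  have hks : (2:ℝ)^k ≤ s := by exact_mod_cast Nat.pow_log_le_self 2 (by omega)
  have hks' : (s:ℝ) ≤ 2*2^k := by
    have h := Nat.lt_pow_succ_log_self (b := 2) (by norm_num) s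
    have h' : (s:ℝ) < 2^(k+1) := by exact_mod_cast h
    rw [pow_succ] at h'
    linarith
  set L : ℝ := logPlus ((N:ℝ)/2^(k+1)) with hLdef
  have hL0 : 0 ≤ L := logPlus_nonneg _
  have hLP : L ≤ logPlus ((N:ℝ)/s) := by
    rw [hLdef]
    apply logPlus_mono
    · positivity
    · apply div_le_div_of_nonneg_left (by positivity) hs0
      rw [pow_succ]
      linarith
  have hsum : Wsum ≤ -(s * Real.sqrt ((8/s) * logPlus ((N:ℝ)/s))) := by
    have h1 : Wsum / s ≤ -Real.sqrt ((8/s) * logPlus ((N:ℝ)/s)) := by linarith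
    calc Wsum = (Wsum/s)*s := by field_simp
      _ ≤ (-Real.sqrt ((8/s) * logPlus ((N:ℝ)/s)))*s := mul_le_mul_of_nonneg_right h1 hs0.le
      _ = -(s * Real.sqrt ((8/s) * logPlus ((N:ℝ)/s))) := by ring
  have hsq : (s:ℝ) * Real.sqrt ((8/s) * logPlus ((N:ℝ)/s))
      = Real.sqrt (8*s*logPlus ((N:ℝ)/s)) := by
    rw [show (8:ℝ)*s*logPlus ((N:ℝ)/s) = s^2*((8/s)*logPlus ((N:ℝ)/s)) by field_simp,
      Real.sqrt_mul (sq_nonneg (s:ℝ)), Real.sqrt_sq hs0.le]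
  have hsqle : Real.sqrt (8*(s:ℝ)*L) ≤ Real.sqrt (8*s*logPlus ((N:ℝ)/s)) := by
    apply Real.sqrt_le_sqrt
    nlinarith
  have hT_lb : (s:ℝ)*Δ + Real.sqrt (8*(s:ℝ)*L) ≤ Tval := by
    rw [hT]
    rw [← hsq] at hsqle
    linarith
  have hblock := block_real (Δ := Δ) (u := (2:ℝ)^k) (s := (s:ℝ)) (L := L)
    hΔpos (by positivity) hL0 hks (by linarith)
  have hlam0 : 0 ≤ Δ/2 + Real.sqrt (L/2^k) := by positivity
  have hmul : (Δ/2 + Real.sqrt (L/2^k)) * ((s:ℝ)*Δ + Real.sqrt (8*s*L))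
      ≤ (Δ/2 + Real.sqrt (L/2^k)) * Tval := mul_le_mul_of_nonneg_left hT_lb hlam0
  simp only [lamK, betK, ← hLdef, ← hk]
  linarith

lemma helper_prefix {z c L : ℝ} (hz : 0 < z) (hc : 0 < c) (hL : Real.exp (-L) = z/c) :
    Real.exp (-z - 3/2*L) ≤ (7/4 * (Real.exp (-(z/2)) - Real.exp (-z)))/(c*Real.sqrt c) := by
  have hsc : 0 < Real.sqrt c := Real.sqrt_pos.mpr hc
  have h1 : Real.exp (-z - 3/2*L)
      = Real.exp (-z) * (Real.exp (-L) * Real.sqrt (Real.exp (-L))) := by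
    rw [sqrt_exp_half, ← Real.exp_add, ← Real.exp_add]
    congr 1
    ring
  rw [h1, hL, Real.sqrt_div hz.le]
  have hLHS : Real.exp (-z) * (z/c * (Real.sqrt z/Real.sqrt c))
      = (z*Real.sqrt z*Real.exp (-z))/(c*Real.sqrt c) := by
    field_simp
  rw [hLHS]
  exact (div_le_div_iff_of_pos_right (by positivity)).mpr (telescope_ineq hz.le)

lemma sum_bound {N : ℕ} (hN : 0 < N) {Δ : ℝ} (hΔpos : 0 < Δ) (hbig : 15 < N * Δ^2) :
    ∑' k : ℕ, ENNReal.ofReal (Real.exp (-(betK N Δ k)))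
      ≤ ENNReal.ofReal (15 / (N * Δ^2)) := by
  set a : ℝ := Δ^2/8 with ha_def
  have ha : 0 < a := by positivity
  set c : ℝ := N * a with hc_def
  have hc : 15/8 < c := by
    rw [hc_def, ha_def]
    have : (N:ℝ) * (Δ^2/8) = (N*Δ^2)/8 := by ring
    rw [this]
    linarith
  have hc0 : 0 < c := by linarith
  set v : ℕ → ℝ := fun k => Real.exp (-(2*2^k*a) - 3/2 * logPlus ((N:ℝ)/2^(k+1))) with hv_def
  have hv0 : ∀ k, 0 ≤ v k := fun k => (Real.exp_pos _).le
  have hbet_v : ∀ k, Real.exp (-(betK N Δ k)) ≤ v k := by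
    intro k
    apply Real.exp_le_exp.mpr
    simp only [betK, hv_def, ← ha_def]
    nlinarith [Real.sqrt_nonneg ((2:ℝ)^k*a*(logPlus ((N:ℝ)/2^(k+1))))]
  have hpow : ∀ k : ℕ, (k+1:ℝ) ≤ 2^k := by
    intro k
    exact_mod_cast Nat.lt_two_pow_self (n := k)
  have hvle : ∀ k, v k ≤ Real.exp (-(2*a))^k := by
    intro k
    rw [← Real.exp_nat_mul]
    apply Real.exp_le_exp.mpr
    have h1 := hpow k
    have h2 := logPlus_nonneg ((N:ℝ)/2^(k+1))
    have h3 : (0:ℝ) < 2^k := by positivity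
    nlinarith
  have hsumv : Summable v :=
    Summable.of_nonneg_of_le hv0 hvle
      (summable_geometric_of_lt_one (Real.exp_pos _).le
        (Real.exp_lt_one_iff.mpr (by linarith)))
  have hreal : ∑' k, v k ≤ 15 / (N * Δ^2) := by
    set k₀ := Nat.log 2 N with hk₀
    have hNk₀' : (N:ℝ)+1 ≤ 2^(k₀+1) := by
      have h := Nat.lt_pow_succ_log_self (b := 2) (by norm_num) N
      exact_mod_cast h
    -- prefix bound
    have hpre : ∑ k ∈ Finset.range k₀, v k ≤ (7/4)/(c*Real.sqrt c) := by
      have hterm : ∀ k ∈ Finset.range k₀, v k ≤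
          (7/4 * (Real.exp (-(2*2^k*a)/2) - Real.exp (-(2*2^k*a))))/(c*Real.sqrt c) := by
        intro k hk
        rw [Finset.mem_range] at hk
        have h2N : (2:ℝ)^(k+1) ≤ N := by
          have h1 : 2^(k+1) ≤ 2^k₀ := Nat.pow_le_pow_right (by norm_num) (by omega)
          have h2 : 2^k₀ ≤ N := Nat.pow_log_le_self 2 (by omega)
          exact_mod_cast le_trans h1 h2
        have h2pos : (0:ℝ) < 2^(k+1) := by positivity
        have hw1 : (1:ℝ) ≤ (N:ℝ)/2^(k+1) := (one_le_div h2pos).mpr h2N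
        have hwpos : (0:ℝ) < (N:ℝ)/2^(k+1) := by linarith
        have hLeq : logPlus ((N:ℝ)/2^(k+1)) = Real.log ((N:ℝ)/2^(k+1)) :=
          max_eq_right (Real.log_nonneg hw1)
        have hz0 : (0:ℝ) < 2*2^k*a := by positivity
        have hexpL : Real.exp (-(logPlus ((N:ℝ)/2^(k+1)))) = (2*2^k*a)/c := by
          rw [hLeq, Real.exp_neg, Real.exp_log hwpos, inv_div, hc_def]
          rw [show (2:ℝ)*2^k*a = 2^(k+1)*a by rw [pow_succ]; ring]
          rw [mul_div_mul_right _ _ (ne_of_gt ha)]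
        have := helper_prefix hz0 hc0 hexpL
        calc v k = Real.exp (-(2*2^k*a) - 3/2 * logPlus ((N:ℝ)/2^(k+1))) := rfl
          _ ≤ (7/4 * (Real.exp (-((2*2^k*a)/2)) - Real.exp (-(2*2^k*a))))/(c*Real.sqrt c) := this
          _ = (7/4 * (Real.exp (-(2*2^k*a)/2) - Real.exp (-(2*2^k*a))))/(c*Real.sqrt c) := by
              rw [neg_div]
      calc ∑ k ∈ Finset.range k₀, v k
          ≤ ∑ k ∈ Finset.range k₀,
            (7/4 * (Real.exp (-(2*2^k*a)/2) - Real.exp (-(2*2^k*a))))/(c*Real.sqrt c) :=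
            Finset.sum_le_sum hterm
        _ = (7/4 * ∑ k ∈ Finset.range k₀,
              (Real.exp (-(2^k*a)) - Real.exp (-(2^(k+1)*a))))/(c*Real.sqrt c) := by
            rw [← Finset.sum_div, ← Finset.mul_sum]
            congr 2
            apply Finset.sum_congr rfl
            intro k _
            congr 2
            · congr 1
              ring
            · congr 1
              rw [pow_succ]
              ring
        _ ≤ (7/4)/(c*Real.sqrt c) := by
            have hsum1 : ∑ k ∈ Finset.range k₀,
                (Real.exp (-(2^k*a)) - Real.exp (-(2^(k+1)*a))) ≤ 1 := by
              rw [Finset.sum_range_sub' (fun k => Real.exp (-(2^k*a))) k₀]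
              have e0 : -((2:ℝ)^(0:ℕ)*a) ≤ 0 := neg_nonpos.mpr (by positivity)
              have e1 : Real.exp (-((2:ℝ)^(0:ℕ)*a)) ≤ 1 := by
                calc Real.exp (-((2:ℝ)^(0:ℕ)*a)) ≤ Real.exp 0 := Real.exp_le_exp.mpr e0
                  _ = 1 := Real.exp_zero
              have e2 : 0 < Real.exp (-((2:ℝ)^k₀*a)) := Real.exp_pos _
              linarith
            exact (div_le_div_iff_of_pos_right (by positivity)).mpr (by nlinarith)
    -- tail bound
    have hE6 : (6:ℝ) ≤ Real.exp c := by
      have h1 : Real.exp (15/8) ≤ Real.exp c := Real.exp_le_exp.mpr hc.le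
      linarith [six_le_exp_15_8]
    have hE1 : (1:ℝ) < Real.exp c := by linarith
    have hrlt : Real.exp (-c) < 1 := by
      rw [Real.exp_neg]
      exact inv_lt_one_of_one_lt₀ hE1
    have hr0 : (0:ℝ) ≤ Real.exp (-c) := (Real.exp_pos _).le
    have htail : ∑' j : ℕ, v (j + k₀) ≤ (3/8)/c := by
      have hterm : ∀ j : ℕ, v (j + k₀) ≤ Real.exp (-c)*(Real.exp (-c))^j := by
        intro j
        have h1 : v (j + k₀) ≤ Real.exp (-(2*2^(j+k₀)*a)) := by
          simp only [hv_def]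
          apply Real.exp_le_exp.mpr
          have := logPlus_nonneg ((N:ℝ)/2^(j+k₀+1))
          linarith
        have h2 : ((j:ℝ)+1)*c ≤ 2*2^(j+k₀)*a := by
          have hj : (j+1:ℝ) ≤ 2^j := hpow j
          have hN2 : (N:ℝ)+1 ≤ 2^(k₀+1) := hNk₀'
          have hsplit : (2:ℝ)*2^(j+k₀) = 2^j * 2^(k₀+1) := by
            rw [pow_add, pow_succ]; ring
          have hj0 : (0:ℝ) ≤ (j:ℝ)+1 := by positivity
          have hNc : (0:ℝ) ≤ (N:ℝ) := by positivity
          have key : ((j:ℝ)+1)*(N:ℝ) ≤ 2^j * 2^(k₀+1) := by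
            calc ((j:ℝ)+1)*(N:ℝ) ≤ 2^j * ((N:ℝ)+1) := by nlinarith [pow_pos (by norm_num : (0:ℝ) < 2) j]
              _ ≤ 2^j * 2^(k₀+1) := by nlinarith [pow_pos (by norm_num : (0:ℝ) < 2) j]
          calc ((j:ℝ)+1)*c = ((j:ℝ)+1)*(N:ℝ)*a := by rw [hc_def]; ring
            _ ≤ (2^j * 2^(k₀+1))*a := mul_le_mul_of_nonneg_right key ha.le
            _ = 2*2^(j+k₀)*a := by rw [hsplit]
        calc v (j + k₀) ≤ Real.exp (-(2*2^(j+k₀)*a)) := h1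
          _ ≤ Real.exp (-(((j:ℝ)+1)*c)) := Real.exp_le_exp.mpr (by linarith)
          _ = Real.exp (-c)*(Real.exp (-c))^j := by
              rw [← Real.exp_nat_mul, ← Real.exp_add]
              congr 1
              ring
      have hgeo : Summable (fun j : ℕ => Real.exp (-c)*(Real.exp (-c))^j) :=
        (summable_geometric_of_lt_one hr0 hrlt).mul_left _
      have hsum_tail : Summable (fun j : ℕ => v (j + k₀)) :=
        (summable_nat_add_iff k₀).mpr hsumv
      calc ∑' j : ℕ, v (j + k₀) ≤ ∑' j : ℕ, Real.exp (-c)*(Real.exp (-c))^j :=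
            Summable.tsum_le_tsum hterm hsum_tail hgeo
        _ = Real.exp (-c)*(1 - Real.exp (-c))⁻¹ := by
            rw [tsum_mul_left, tsum_geometric_of_lt_one hr0 hrlt]
        _ ≤ (3/8)/c := by
            have h3 : 8*c + 3 ≤ 3*Real.exp c := by
              have hle : Real.exp c = Real.exp (15/8) * Real.exp (c - 15/8) := by
                rw [← Real.exp_add]; ring_nf
              have h7 : 1 + (c - 15/8) ≤ Real.exp (c - 15/8) := by
                linarith [Real.add_one_le_exp (c - 15/8)]
              have h8 : 6*(1 + (c - 15/8)) ≤ Real.exp c := by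
                rw [hle]
                have := Real.exp_pos (c - 15/8)
                nlinarith [six_le_exp_15_8]
              linarith
            have hkey : Real.exp (-c)*(1 - Real.exp (-c))⁻¹ = (Real.exp c - 1)⁻¹ := by
              rw [Real.exp_neg]
              have hEne : Real.exp c ≠ 0 := (Real.exp_pos c).ne'
              have hE1' : Real.exp c - 1 ≠ 0 := ne_of_gt (by linarith)
              have hmid : 1 - (Real.exp c)⁻¹ ≠ 0 := by
                have : (Real.exp c)⁻¹ < 1 := inv_lt_one_of_one_lt₀ hE1
                linarith
              field_simp
            rw [hkey]
            rw [inv_eq_one_div, div_le_div_iff₀ (by linarith) (by linarith)]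
            linarith
    -- combine
    have hsplit := (Summable.sum_add_tsum_nat_add k₀ hsumv).symm
    have hNd : (0:ℝ) < (N:ℝ)*Δ^2 := by positivity
    have hfinal : 15/((N:ℝ)*Δ^2) = (15/8)/c := by
      rw [hc_def, ha_def]
      field_simp
    rw [hsplit, hfinal]
    have hsqc : (34/25:ℝ) ≤ Real.sqrt c := by
      nlinarith [Real.sq_sqrt hc0.le, Real.sqrt_nonneg c]
    have hpre2 : (7/4)/(c*Real.sqrt c) ≤ (175/136)/c := by
      rw [div_le_div_iff₀ (by positivity) hc0]
      have hsc0 : 0 < Real.sqrt c := Real.sqrt_pos.mpr hc0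
      nlinarith
    have : (175/136:ℝ)/c + (3/8)/c ≤ (15/8)/c := by
      rw [← add_div]
      exact (div_le_div_iff_of_pos_right hc0).mpr (by norm_num)
    linarith [hpre, htail, hpre2]
  calc ∑' k : ℕ, ENNReal.ofReal (Real.exp (-(betK N Δ k)))
      ≤ ∑' k : ℕ, ENNReal.ofReal (v k) :=
        ENNReal.tsum_le_tsum (fun k => ENNReal.ofReal_le_ofReal (hbet_v k))
    _ = ENNReal.ofReal (∑' k, v k) := (ENNReal.ofReal_tsum_of_nonneg hv0 hsumv).symm
    _ ≤ ENNReal.ofReal (15 / (N * Δ^2)) := ENNReal.ofReal_le_ofReal hreal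

section core
variable {Ω : Type*} [MeasurableSpace Ω] {μ : Measure Ω} [IsProbabilityMeasure μ]

/-- σ-algebra generated by `X i, Y i` for `i < s`. -/
def pastSA (X Y : ℕ → Ω → ℝ) (s : ℕ) : MeasurableSpace Ω :=
  ⨆ j ∈ {j : ℕ ⊕ ℕ | Sum.elim id id j < s},
    MeasurableSpace.comap (Sum.elim X Y j) inferInstance

/-- σ-algebra generated by `X i, Y i` for `s ≤ i`. -/
def futSA (X Y : ℕ → Ω → ℝ) (s : ℕ) : MeasurableSpace Ω :=
  ⨆ j ∈ {j : ℕ ⊕ ℕ | s ≤ Sum.elim id id j},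
    MeasurableSpace.comap (Sum.elim X Y j) inferInstance

variable {X Y : ℕ → Ω → ℝ}

lemma measurable_elim (hmeasX : ∀ i, Measurable (X i)) (hmeasY : ∀ i, Measurable (Y i))
    (j : ℕ ⊕ ℕ) : Measurable (Sum.elim X Y j) := by
  cases j with
  | inl i => exact hmeasX i
  | inr i => exact hmeasY i

lemma pastSA_le (hmeasX : ∀ i, Measurable (X i)) (hmeasY : ∀ i, Measurable (Y i)) (s : ℕ) :
    pastSA X Y s ≤ (inferInstance : MeasurableSpace Ω) :=
  iSup₂_le fun j _ => (measurable_elim hmeasX hmeasY j).comap_le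

lemma indep_past_fut (hmeasX : ∀ i, Measurable (X i)) (hmeasY : ∀ i, Measurable (Y i))
    (hindep : iIndepFun (Sum.elim X Y) μ) (s : ℕ) :
    Indep (pastSA X Y s) (futSA X Y s) μ := by
  refine indep_iSup_of_disjoint (fun j => (measurable_elim hmeasX hmeasY j).comap_le)
    hindep.iIndep ?_
  rw [Set.disjoint_left]
  intro j hj hj'
  simp only [Set.mem_setOf_eq] at hj hj'
  omega

lemma indepFun_past_fut (hmeasX : ∀ i, Measurable (X i)) (hmeasY : ∀ i, Measurable (Y i))
    (hindep : iIndepFun (Sum.elim X Y) μ) {s : ℕ} {f g : Ω → ℝ}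
    (hf : Measurable[pastSA X Y s] f) (hg : Measurable[futSA X Y s] g) :
    IndepFun f g μ := by
  rw [IndepFun_iff_Indep]
  exact indep_of_indep_of_le_left
    (indep_of_indep_of_le_right (indep_past_fut hmeasX hmeasY hindep s) hg.comap_le)
    hf.comap_le

lemma measurable_X_past {i s : ℕ} (h : i < s) : Measurable[pastSA X Y s] (X i) :=
  Measurable.of_comap_le
    (le_biSup (fun j => MeasurableSpace.comap (Sum.elim X Y j) inferInstance)
      (show (Sum.inl i : ℕ ⊕ ℕ) ∈ {j : ℕ ⊕ ℕ | Sum.elim id id j < s} from h))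

lemma measurable_Y_past {i s : ℕ} (h : i < s) : Measurable[pastSA X Y s] (Y i) :=
  Measurable.of_comap_le
    (le_biSup (fun j => MeasurableSpace.comap (Sum.elim X Y j) inferInstance)
      (show (Sum.inr i : ℕ ⊕ ℕ) ∈ {j : ℕ ⊕ ℕ | Sum.elim id id j < s} from h))

lemma measurable_X_fut {i s : ℕ} (h : s ≤ i) : Measurable[futSA X Y s] (X i) :=
  Measurable.of_comap_le
    (le_biSup (fun j => MeasurableSpace.comap (Sum.elim X Y j) inferInstance)
      (show (Sum.inl i : ℕ ⊕ ℕ) ∈ {j : ℕ ⊕ ℕ | s ≤ Sum.elim id id j} from h))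

lemma measurable_Y_fut {i s : ℕ} (h : s ≤ i) : Measurable[futSA X Y s] (Y i) :=
  Measurable.of_comap_le
    (le_biSup (fun j => MeasurableSpace.comap (Sum.elim X Y j) inferInstance)
      (show (Sum.inr i : ℕ ⊕ ℕ) ∈ {j : ℕ ⊕ ℕ | s ≤ Sum.elim id id j} from h))

/-- Ville-type maximal inequality for the exponential supermartingale. -/
lemma ville (hmeasX : ∀ i, Measurable (X i)) (hmeasY : ∀ i, Measurable (Y i))
    (hindep : iIndepFun (Sum.elim X Y) μ)
    (Δ l β : ℝ)
    (hInt : ∀ i, Integrable (fun ω => Real.exp (l * (Δ - (X i ω - Y i ω)))) μ)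
    (hMgf : ∀ i, (∫ ω, Real.exp (l * (Δ - (X i ω - Y i ω))) ∂μ) ≤ Real.exp (l^2)) :
    μ {ω | ∃ s : ℕ, β ≤ l * (∑ n ∈ Finset.range s, (Δ - (X n ω - Y n ω))) - s * l^2}
      ≤ ENNReal.ofReal (Real.exp (-β)) := by
  classical
  set T : ℕ → Ω → ℝ := fun s ω => ∑ n ∈ Finset.range s, (Δ - (X n ω - Y n ω)) with hT
  set M : ℕ → Ω → ℝ := fun s ω => Real.exp (l * T s ω - s * l^2) with hM
  set R : ℕ → Ω → ℝ := fun s ω => Real.exp (l * (Δ - (X s ω - Y s ω)) - l^2) with hR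
  have hM_pos : ∀ s ω, 0 < M s ω := fun s ω => Real.exp_pos _
  have hMrec : ∀ s ω, M (s+1) ω = M s ω * R s ω := by
    intro s ω
    simp only [hM, hR, hT]
    rw [← Real.exp_add, Finset.sum_range_succ]
    congr 1
    push_cast
    ring
  -- measurability wrt past
  have hT_past : ∀ r s : ℕ, r ≤ s → Measurable[pastSA X Y s] (T r) := by
    intro r s hrs
    apply Finset.measurable_sum
    intro n hn
    have hn' : n < s := lt_of_lt_of_le (Finset.mem_range.mp hn) hrs
    exact measurable_const.sub ((measurable_X_past hn').sub (measurable_Y_past hn'))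
  have hM_past : ∀ r s : ℕ, r ≤ s → Measurable[pastSA X Y s] (M r) := by
    intro r s hrs
    exact (((measurable_const.mul (hT_past r s hrs)).sub measurable_const)).exp
  have hR_fut : ∀ s : ℕ, Measurable[futSA X Y s] (R s) := by
    intro s
    exact ((measurable_const.mul (measurable_const.sub
      ((measurable_X_fut le_rfl).sub (measurable_Y_fut le_rfl)))).sub measurable_const).exp
  have hM_meas : ∀ s, Measurable (M s) := by
    intro s
    exact ((hM_past s s le_rfl).mono (pastSA_le hmeasX hmeasY s) le_rfl)
  -- integrability of R and its mean
  have hRint : ∀ s, Integrable (R s) μ := by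
    intro s
    have := (hInt s).const_mul (Real.exp (-l^2))
    refine this.congr (Filter.Eventually.of_forall fun ω => ?_)
    simp only [hR, ← Real.exp_add]
    congr 1
    ring
  have hRmean : ∀ s, ∫ ω, R s ω ∂μ ≤ 1 := by
    intro s
    have heq : ∫ ω, R s ω ∂μ = Real.exp (-l^2) * ∫ ω, Real.exp (l * (Δ - (X s ω - Y s ω))) ∂μ := by
      rw [← integral_const_mul]
      apply integral_congr_ae
      refine Filter.Eventually.of_forall fun ω => ?_
      simp only [hR, ← Real.exp_add]
      congr 1
      ring
    rw [heq]
    calc Real.exp (-l^2) * ∫ ω, Real.exp (l * (Δ - (X s ω - Y s ω))) ∂μ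
        ≤ Real.exp (-l^2) * Real.exp (l^2) := by
          apply mul_le_mul_of_nonneg_left (hMgf s) (Real.exp_pos _).le
      _ = 1 := by rw [← Real.exp_add]; simp
  -- integrability of M
  have hMint : ∀ s, Integrable (M s) μ := by
    intro s
    induction s with
    | zero =>
      refine (integrable_const (1:ℝ)).congr (Filter.Eventually.of_forall fun ω => ?_)
      simp [hM, hT]
    | succ s ih =>
      have hind : IndepFun (M s) (R s) μ :=
        indepFun_past_fut hmeasX hmeasY hindep (hM_past s s le_rfl) (hR_fut s)
      have := hind.integrable_mul ih (hRint s)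
      refine this.congr (Filter.Eventually.of_forall fun ω => ?_)
      exact (hMrec s ω).symm
  -- the stopping sets
  set B : ℕ → Set Ω := fun s => {ω | ∀ r, r < s → M r ω < Real.exp β} with hB
  set A : ℕ → Set Ω := fun s => B s ∩ {ω | Real.exp β ≤ M s ω} with hA
  have hB_past : ∀ s t : ℕ, s ≤ t → MeasurableSet[pastSA X Y t] (B s) := by
    intro s t hst
    have : B s = ⋂ (r : ℕ) (_ : r < s), (M r) ⁻¹' (Set.Iio (Real.exp β)) := by
      ext ω; simp [hB]
    rw [this]
    exact MeasurableSet.iInter fun r => MeasurableSet.iInter fun hr =>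
      (hM_past r t (le_trans hr.le hst)) measurableSet_Iio
  have hA_past : ∀ s : ℕ, MeasurableSet[pastSA X Y (s+1)] (A s) := by
    intro s
    exact ((hB_past s (s+1) (Nat.le_succ s)).inter
      ((hM_past s (s+1) (Nat.le_succ s)) measurableSet_Ici))
  have hA_meas : ∀ s, MeasurableSet (A s) :=
    fun s => (pastSA_le hmeasX hmeasY (s+1)) _ (hA_past s)
  have hB_meas : ∀ s, MeasurableSet (B s) :=
    fun s => (pastSA_le hmeasX hmeasY s) _ (hB_past s s le_rfl)
  -- event inclusion
  have hincl : {ω | ∃ s : ℕ, β ≤ l * T s ω - s * l^2} ⊆ ⋃ s, A s := by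
    intro ω hω
    obtain ⟨s₀, hs₀⟩ := hω
    have hex : ∃ s, Real.exp β ≤ M s ω := by
      refine ⟨s₀, ?_⟩
      simp only [hM]
      exact Real.exp_le_exp.mpr hs₀
    refine Set.mem_iUnion.mpr ⟨Nat.find hex, ?_, Nat.find_spec hex⟩
    intro r hr
    exact lt_of_not_ge (Nat.find_min hex hr)
  -- disjointness
  have hdisj : Pairwise (Function.onFun Disjoint A) := by
    intro r s hrs
    simp only [Function.onFun]
    wlog h : r < s generalizing r s
    · exact (this hrs.symm (by omega)).symm
    rw [Set.disjoint_left]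
    rintro ω ⟨_, hω2⟩ ⟨hω3, _⟩
    exact absurd hω2 (not_le.mpr (hω3 r h))
  -- partial sums bound
  have hpartial : ∀ m : ℕ, ∑ s ∈ Finset.range m, μ (A s) ≤ ENNReal.ofReal (Real.exp (-β)) := by
    intro m
    set q : ℕ → ℝ := fun s => ∫ ω, Set.indicator (A s) (M s) ω ∂μ with hq
    set b : ℕ → ℝ := fun s => ∫ ω, Set.indicator (B s) (M s) ω ∂μ with hb
    have hqint : ∀ s, Integrable (Set.indicator (A s) (M s)) μ :=
      fun s => (hMint s).indicator (hA_meas s)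
    have hbint : ∀ s, Integrable (Set.indicator (B s) (M s)) μ :=
      fun s => (hMint s).indicator (hB_meas s)
    have hb0 : b 0 = 1 := by
      have h1 : Set.indicator (B 0) (M 0) = fun _ => (1:ℝ) := by
        funext ω
        have hmem : ω ∈ B 0 := by intro r hr; omega
        rw [Set.indicator_of_mem hmem]
        simp [hM, hT]
      simp only [hb, h1]
      simp
    have hstep : ∀ s, q s ≤ b s - b (s+1) := by
      intro s
      -- b (s+1) ≤ ∫ indicator (B (s+1)) (M s)
      have hBs1_past : MeasurableSet[pastSA X Y s] (B (s+1)) := by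
        have : B (s+1) = ⋂ (r : ℕ) (_ : r < s + 1), (M r) ⁻¹' (Set.Iio (Real.exp β)) := by
          ext ω; simp [hB]
        rw [this]
        exact MeasurableSet.iInter fun r => MeasurableSet.iInter fun hr =>
          (hM_past r s (Nat.lt_succ_iff.mp hr)) measurableSet_Iio
      have hBs1_meas : MeasurableSet (B (s+1)) := hB_meas (s+1)
      have hind : IndepFun (Set.indicator (B (s+1)) (M s)) (R s) μ :=
        indepFun_past_fut hmeasX hmeasY hindep
          ((hM_past s s le_rfl).indicator hBs1_past) (hR_fut s)
      have hptwise : ∀ ω, Set.indicator (B (s+1)) (M (s+1)) ω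
          = Set.indicator (B (s+1)) (M s) ω * R s ω := by
        intro ω
        by_cases h : ω ∈ B (s+1)
        · rw [Set.indicator_of_mem h, Set.indicator_of_mem h, hMrec]
        · rw [Set.indicator_of_notMem h, Set.indicator_of_notMem h, zero_mul]
      have hb1 : b (s+1) = (∫ ω, Set.indicator (B (s+1)) (M s) ω ∂μ) * ∫ ω, R s ω ∂μ := by
        have : b (s+1) = ∫ ω, Set.indicator (B (s+1)) (M s) ω * R s ω ∂μ := by
          simp only [hb]
          exact integral_congr_ae (Filter.Eventually.of_forall hptwise)
        rw [this]
        exact hind.integral_fun_mul_eq_mul_integral ((hMint s).indicator hBs1_meas).aestronglyMeasurable (hRint s).aestronglyMeasurable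
      have hnonneg1 : 0 ≤ ∫ ω, Set.indicator (B (s+1)) (M s) ω ∂μ := by
        apply integral_nonneg
        intro ω
        exact Set.indicator_nonneg (fun ω _ => (hM_pos s ω).le) ω
      have hble : b (s+1) ≤ ∫ ω, Set.indicator (B (s+1)) (M s) ω ∂μ := by
        rw [hb1]
        exact mul_le_of_le_one_right hnonneg1 (hRmean s)
      -- split B s = B (s+1) ∪ A s
      have hsplit : ∀ ω, Set.indicator (B s) (M s) ω
          = Set.indicator (B (s+1)) (M s) ω + Set.indicator (A s) (M s) ω := by
        intro ω
        by_cases h1 : ω ∈ B s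
        · by_cases h2 : Real.exp β ≤ M s ω
          · have hmem1 : ω ∉ B (s+1) := by
              intro hmem
              exact absurd h2 (not_le.mpr (hmem s (Nat.lt_succ_self s)))
            have hmem2 : ω ∈ A s := ⟨h1, h2⟩
            rw [Set.indicator_of_mem h1, Set.indicator_of_notMem hmem1,
              Set.indicator_of_mem hmem2, zero_add]
          · have hmem1 : ω ∈ B (s+1) := by
              intro r hr
              rcases Nat.lt_succ_iff_lt_or_eq.mp hr with h | h
              · exact h1 r h
              · subst h; exact not_le.mp h2
            have hmem2 : ω ∉ A s := fun hmem => h2 hmem.2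
            rw [Set.indicator_of_mem h1, Set.indicator_of_mem hmem1,
              Set.indicator_of_notMem hmem2, add_zero]
        · have hmem1 : ω ∉ B (s+1) := fun hmem => h1 (fun r hr => hmem r (hr.trans (Nat.lt_succ_self s)))
          have hmem2 : ω ∉ A s := fun hmem => h1 hmem.1
          rw [Set.indicator_of_notMem h1, Set.indicator_of_notMem hmem1,
            Set.indicator_of_notMem hmem2, add_zero]
      have hbsum : b s = (∫ ω, Set.indicator (B (s+1)) (M s) ω ∂μ) + q s := by
        have : b s = ∫ ω, (Set.indicator (B (s+1)) (M s) ω + Set.indicator (A s) (M s) ω) ∂μ := by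
          simp only [hb]
          exact integral_congr_ae (Filter.Eventually.of_forall hsplit)
        rw [this, integral_add ((hMint s).indicator hBs1_meas) (hqint s)]
      linarith [hble, hbsum.ge, hbsum.le]
    have hq_ge : ∀ s, Real.exp β * (μ (A s)).toReal ≤ q s := by
      intro s
      have : q s = ∫ ω in A s, M s ω ∂μ := by
        simp only [hq]
        exact integral_indicator (hA_meas s)
      rw [this]
      have h := setIntegral_ge_of_const_le_real (hA_meas s) (measure_ne_top μ _)
        (fun ω hω => hω.2) ((hMint s).integrableOn)
      exact h
    have hbm_nonneg : 0 ≤ b m := by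
      apply integral_nonneg
      intro ω
      exact Set.indicator_nonneg (fun ω _ => (hM_pos m ω).le) ω
    have hsum_q : ∑ s ∈ Finset.range m, q s ≤ 1 := by
      calc ∑ s ∈ Finset.range m, q s ≤ ∑ s ∈ Finset.range m, (b s - b (s+1)) :=
            Finset.sum_le_sum fun s _ => hstep s
        _ = b 0 - b m := Finset.sum_range_sub' b m
        _ ≤ 1 := by rw [hb0]; linarith
    have hsum_toReal : ∑ s ∈ Finset.range m, (μ (A s)).toReal ≤ Real.exp (-β) := by
      have h1 : Real.exp β * ∑ s ∈ Finset.range m, (μ (A s)).toReal ≤ 1 := by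
        rw [Finset.mul_sum]
        calc ∑ s ∈ Finset.range m, Real.exp β * (μ (A s)).toReal
            ≤ ∑ s ∈ Finset.range m, q s := Finset.sum_le_sum fun s _ => hq_ge s
          _ ≤ 1 := hsum_q
      rw [Real.exp_neg]
      have h2 : Real.exp β * (Real.exp β)⁻¹ = 1 := mul_inv_cancel₀ (ne_of_gt (Real.exp_pos β))
      nlinarith [Real.exp_pos β]
    calc ∑ s ∈ Finset.range m, μ (A s)
        = ENNReal.ofReal (∑ s ∈ Finset.range m, (μ (A s)).toReal) := by
          rw [ENNReal.ofReal_sum_of_nonneg (fun _ _ => ENNReal.toReal_nonneg)]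
          exact Finset.sum_congr rfl fun s _ => (ENNReal.ofReal_toReal (measure_ne_top μ _)).symm
      _ ≤ ENNReal.ofReal (Real.exp (-β)) := ENNReal.ofReal_le_ofReal hsum_toReal
  -- conclude
  calc μ {ω | ∃ s : ℕ, β ≤ l * T s ω - s * l^2} ≤ μ (⋃ s, A s) := measure_mono hincl
    _ = ∑' s, μ (A s) := measure_iUnion hdisj hA_meas
    _ ≤ ENNReal.ofReal (Real.exp (-β)) := by
      rw [ENNReal.tsum_eq_iSup_sum]
      apply iSup_le
      intro F
      calc ∑ s ∈ F, μ (A s) ≤ ∑ s ∈ Finset.range ((F.sup id).succ), μ (A s) :=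
            Finset.sum_le_sum_of_subset (Finset.subset_range_sup_succ F)
        _ ≤ ENNReal.ofReal (Real.exp (-β)) := hpartial _
end core

section mgf
variable {Ω : Type*} [MeasurableSpace Ω] {μ : Measure Ω} [IsProbabilityMeasure μ]
variable {X Y : ℕ → Ω → ℝ}

lemma mgf_bound (hindep : iIndepFun (Sum.elim X Y) μ)
    (hidentX : ∀ i, IdentDistrib (X i) (X 0) μ μ)
    (hidentY : ∀ i, IdentDistrib (Y i) (Y 0) μ μ)
    (hsubX : ∀ i, IsOneSubgaussian μ (X i))
    (hsubY : ∀ i, IsOneSubgaussian μ (Y i))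
    {Δ : ℝ} (hΔ : Δ = (∫ ω, X 0 ω ∂μ) - ∫ ω, Y 0 ω ∂μ) (i : ℕ) (l : ℝ) :
    Integrable (fun ω => Real.exp (l * (Δ - (X i ω - Y i ω)))) μ ∧
    (∫ ω, Real.exp (l * (Δ - (X i ω - Y i ω))) ∂μ) ≤ Real.exp (l^2) := by
  have hΔi : Δ = (∫ ω, X i ω ∂μ) - ∫ ω, Y i ω ∂μ := by
    rw [hΔ, (hidentX i).integral_eq, (hidentY i).integral_eq]
  set EX := ∫ ω, X i ω ∂μ with hEX
  set EY := ∫ ω, Y i ω ∂μ with hEY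
  set f : Ω → ℝ := fun ω => Real.exp ((-l) * X i ω - (-l) * EX) with hf
  set g : Ω → ℝ := fun ω => Real.exp (l * Y i ω - l * EY) with hg
  have hfint : Integrable f μ := ((hsubX i).2 (-l)).1
  have hgint : Integrable g μ := ((hsubY i).2 l).1
  have hfmean : ∫ ω, f ω ∂μ ≤ Real.exp (l^2/2) := by
    have h := ((hsubX i).2 (-l)).2
    calc ∫ ω, f ω ∂μ = ∫ ω, Real.exp ((-l) * X i ω - (-l) * (∫ ω', X i ω' ∂μ)) ∂μ := rfl
      _ ≤ Real.exp ((-l)^2/2) := h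
      _ = Real.exp (l^2/2) := by ring_nf
  have hgmean : ∫ ω, g ω ∂μ ≤ Real.exp (l^2/2) := ((hsubY i).2 l).2
  have hXYind : IndepFun (X i) (Y i) μ :=
    hindep.indepFun (show (Sum.inl i : ℕ ⊕ ℕ) ≠ Sum.inr i by simp)
  have hfgind : IndepFun f g μ := by
    have hφ : Measurable (fun t : ℝ => Real.exp ((-l) * t - (-l) * EX)) :=
      ((measurable_id.const_mul (-l)).sub measurable_const).exp
    have hψ : Measurable (fun t : ℝ => Real.exp (l * t - l * EY)) :=
      ((measurable_id.const_mul l).sub measurable_const).exp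
    exact hXYind.comp hφ hψ
  have hpoint : ∀ ω, f ω * g ω = Real.exp (l * (Δ - (X i ω - Y i ω))) := by
    intro ω
    rw [hf, hg, ← Real.exp_add]
    congr 1
    rw [hΔi]
    ring
  constructor
  · have := hfgind.integrable_mul hfint hgint
    exact this.congr (Filter.Eventually.of_forall hpoint)
  · have h1 : (∫ ω, Real.exp (l * (Δ - (X i ω - Y i ω))) ∂μ) = (∫ ω, f ω ∂μ) * ∫ ω, g ω ∂μ := by
      rw [← hfgind.integral_fun_mul_eq_mul_integral hfint.aestronglyMeasurable hgint.aestronglyMeasurable]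
      exact integral_congr_ae (Filter.Eventually.of_forall fun ω => (hpoint ω).symm)
    rw [h1]
    calc (∫ ω, f ω ∂μ) * ∫ ω, g ω ∂μ
        ≤ Real.exp (l^2/2) * Real.exp (l^2/2) := by
          apply mul_le_mul hfmean hgmean (integral_nonneg fun ω => (Real.exp_pos _).le)
            (Real.exp_pos _).le
      _ = Real.exp (l^2) := by rw [← Real.exp_add]; ring_nf
end mgf

/-- Let `N` be a positive integer, `X₁, X₂, …` i.i.d. 1-subgaussian, `Y₁, Y₂, …` i.i.d.
1-subgaussian and independent of the `X`'s, with `E[X₁] > E[Y₁]`, `Δ = E[X₁ − Y₁]`, and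
`μ̂ₜ = (1/t)·∑_{n=1}^t (Xₙ − Yₙ)`.  Then
`P(∃ s ≥ 1 : μ̂ₛ + √((8/s)·log⁺(N/s)) ≤ 0) ≤ 15/(N·Δ²)`. -/
theorem stmt1 {Ω : Type*} [MeasurableSpace Ω] (μ : Measure Ω) [IsProbabilityMeasure μ]
    (X Y : ℕ → Ω → ℝ) (hmeasX : ∀ i, Measurable (X i)) (hmeasY : ∀ i, Measurable (Y i))
    (hindep : iIndepFun (Sum.elim X Y) μ)
    (hidentX : ∀ i, IdentDistrib (X i) (X 0) μ μ)
    (hidentY : ∀ i, IdentDistrib (Y i) (Y 0) μ μ)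
    (hsubX : ∀ i, IsOneSubgaussian μ (X i))
    (hsubY : ∀ i, IsOneSubgaussian μ (Y i))
    (hgt : (∫ ω, Y 0 ω ∂μ) < ∫ ω, X 0 ω ∂μ)
    (N : ℕ) (hN : 0 < N)
    (Δ : ℝ) (hΔ : Δ = ∫ ω, (X 0 ω - Y 0 ω) ∂μ) :
    μ {ω | ∃ s : ℕ, 1 ≤ s ∧
        (∑ n ∈ Finset.range s, (X n ω - Y n ω)) / s
          + Real.sqrt ((8 / s) * logPlus ((N : ℝ) / s)) ≤ 0} ≤
      ENNReal.ofReal (15 / (N * Δ ^ 2)) := by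
  classical
  have hΔ' : Δ = (∫ ω, X 0 ω ∂μ) - ∫ ω, Y 0 ω ∂μ := by
    rw [hΔ, integral_sub (hsubX 0).1 (hsubY 0).1]
  have hΔpos : 0 < Δ := by rw [hΔ']; linarith
  by_cases hbig : (N:ℝ) * Δ^2 ≤ 15
  · refine le_trans prob_le_one ?_
    rw [← ENNReal.ofReal_one]
    apply ENNReal.ofReal_le_ofReal
    rw [le_div_iff₀ (by positivity)]
    linarith
  · push_neg at hbig
    have hincl : {ω | ∃ s : ℕ, 1 ≤ s ∧
        (∑ n ∈ Finset.range s, (X n ω - Y n ω)) / s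
          + Real.sqrt ((8 / s) * logPlus ((N : ℝ) / s)) ≤ 0}
        ⊆ ⋃ k : ℕ, {ω | ∃ s : ℕ, betK N Δ k ≤
            lamK N Δ k * (∑ n ∈ Finset.range s, (Δ - (X n ω - Y n ω)))
              - s * (lamK N Δ k)^2} := by
      intro ω hω
      obtain ⟨s, hs1, hineq⟩ := hω
      refine Set.mem_iUnion.mpr ⟨Nat.log 2 s, s, ?_⟩
      refine event_to_block hs1 hN hΔpos hineq ?_
      rw [Finset.sum_sub_distrib, Finset.sum_const, Finset.card_range, nsmul_eq_mul]
    calc μ {ω | ∃ s : ℕ, 1 ≤ s ∧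
        (∑ n ∈ Finset.range s, (X n ω - Y n ω)) / s
          + Real.sqrt ((8 / s) * logPlus ((N : ℝ) / s)) ≤ 0}
        ≤ μ (⋃ k : ℕ, {ω | ∃ s : ℕ, betK N Δ k ≤
            lamK N Δ k * (∑ n ∈ Finset.range s, (Δ - (X n ω - Y n ω)))
              - s * (lamK N Δ k)^2}) := measure_mono hincl
      _ ≤ ∑' k : ℕ, μ {ω | ∃ s : ℕ, betK N Δ k ≤
            lamK N Δ k * (∑ n ∈ Finset.range s, (Δ - (X n ω - Y n ω)))
              - s * (lamK N Δ k)^2} := measure_iUnion_le _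
      _ ≤ ∑' k : ℕ, ENNReal.ofReal (Real.exp (-(betK N Δ k))) := by
          apply ENNReal.tsum_le_tsum
          intro k
          exact ville hmeasX hmeasY hindep Δ (lamK N Δ k) (betK N Δ k)
            (fun i => (mgf_bound hindep hidentX hidentY hsubX hsubY hΔ' i (lamK N Δ k)).1)
            (fun i => (mgf_bound hindep hidentX hidentY hsubX hsubY hΔ' i (lamK N Δ k)).2)
      _ ≤ ENNReal.ofReal (15 / (N * Δ ^ 2)) := sum_bound hN hΔpos hbig
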